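/- arXiv:2006.14111 — 3 statements merged into one kernel-verified Lean document; each statement's English description precedes it below -/
import Mathlib

section
/- Davies-type carré-du-champ bound: there exists a constant c > 0, depending only on d, Λ and the constants in (WS), such that for all β > 0, λ > 0, every function χ : ℝ^d → ℝ with |χ(η) − χ(ζ)| ≤ (β/3)|η − ζ| for all η, ζ ∈ ℝ^d, and every ξ ∈ ℝ^d: Σ_{i=1}^d ∫_{|h| ≤ λ} (e^{χ(ξ + h e^i) − χ(ξ)} − 1)² J(ξ, ξ + h e^i) dh ≤ c e^{βλ}/φ(λ). -/
open MeasureTheory Set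
open scoped ENNReal

lemma sq_exp_sub_one_le (u : ℝ) :
    (Real.exp u - 1) ^ 2 ≤ u ^ 2 * Real.exp (2 * |u|) := by
  have h1 : |Real.exp u - 1| ≤ Real.exp |u| - 1 := by
    rcases le_or_gt 0 u with hu | hu
    · rw [abs_of_nonneg hu, abs_of_nonneg (by linarith [Real.one_le_exp hu])]
    · rw [abs_of_neg hu, abs_of_nonpos (by linarith [Real.exp_lt_one_iff.2 hu])]
      have h2 := Real.add_one_le_exp u
      have h3 := Real.add_one_le_exp (-u)
      linarith
  have h2 : Real.exp |u| - 1 ≤ |u| * Real.exp |u| := by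
    have h3 := Real.add_one_le_exp (-|u|)
    have h4 : Real.exp (-|u|) * Real.exp |u| = 1 := by
      rw [← Real.exp_add]; simp
    nlinarith [Real.exp_pos |u|]
  have h0 : (0:ℝ) ≤ Real.exp |u| - 1 := by linarith [Real.one_le_exp (abs_nonneg u)]
  calc (Real.exp u - 1) ^ 2 = |Real.exp u - 1| ^ 2 := (sq_abs _).symm
    _ ≤ (|u| * Real.exp |u|) ^ 2 := by
        apply pow_le_pow_left₀ (abs_nonneg _) (h1.trans h2)
    _ = u ^ 2 * Real.exp (2 * |u|) := by
        rw [mul_pow, sq_abs]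
        congr 1
        rw [two_mul, Real.exp_add, sq]

lemma integrableOn_abs_rpow_Icc {p lam : ℝ} (hp : -1 < p) (hl : 0 < lam) :
    IntegrableOn (fun h : ℝ => |h| ^ p) (Icc (-lam) lam) := by
  have h1 : IntervalIntegrable (fun x : ℝ => |x| ^ p) volume 0 lam := by
    have := intervalIntegral.intervalIntegrable_rpow' (a := 0) (b := lam) hp
    rw [intervalIntegrable_iff] at this ⊢
    refine this.congr_fun ?_ measurableSet_uIoc
    intro x hx
    rw [uIoc_of_le hl.le] at hx
    show x ^ p = |x| ^ p
    rw [abs_of_pos hx.1]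
  have h2 : IntervalIntegrable (fun x : ℝ => |x| ^ p) volume (-lam) 0 := by
    have := (IntervalIntegrable.iff_comp_neg (f := fun x : ℝ => |x| ^ p)
      (a := 0) (b := lam)).1 h1
    simpa [abs_neg] using this.symm
  have h3 : IntervalIntegrable (fun x : ℝ => |x| ^ p) volume (-lam) lam := h2.trans h1
  rw [← intervalIntegrable_iff_integrableOn_Icc_of_le (by linarith)]
  exact h3

lemma integral_abs_rpow_Icc {p lam : ℝ} (hp : -1 < p) (hl : 0 < lam) :
    ∫ h in Icc (-lam) lam, |h| ^ p = 2 * (lam ^ (p + 1) / (p + 1)) := by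
  have key : ∫ x in (0:ℝ)..lam, |x| ^ p = lam ^ (p + 1) / (p + 1) := by
    rw [intervalIntegral.integral_congr (g := fun x : ℝ => x ^ p) ?_]
    · rw [integral_rpow (Or.inl hp), Real.zero_rpow (by linarith), sub_zero]
    · intro x hx
      rw [uIcc_of_le hl.le] at hx
      simp [abs_of_nonneg hx.1]
  have hneg : ∫ x in (-lam)..(0:ℝ), |x| ^ p = lam ^ (p + 1) / (p + 1) := by
    have := intervalIntegral.integral_comp_neg (a := 0) (b := lam)
      (f := fun x : ℝ => |x| ^ p)
    simp only [abs_neg, neg_zero] at this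
    rw [← this]
    exact key
  have h1 : IntervalIntegrable (fun x : ℝ => |x| ^ p) volume 0 lam := by
    have := intervalIntegral.intervalIntegrable_rpow' (a := 0) (b := lam) hp
    rw [intervalIntegrable_iff] at this ⊢
    refine this.congr_fun ?_ measurableSet_uIoc
    intro x hx
    rw [uIoc_of_le hl.le] at hx
    show x ^ p = |x| ^ p
    rw [abs_of_pos hx.1]
  have h2 : IntervalIntegrable (fun x : ℝ => |x| ^ p) volume (-lam) 0 := by
    have := (IntervalIntegrable.iff_comp_neg (f := fun x : ℝ => |x| ^ p)
      (a := 0) (b := lam)).1 h1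
    simpa [abs_neg] using this.symm
  rw [MeasureTheory.integral_Icc_eq_integral_Ioc,
    ← intervalIntegral.integral_of_le (by linarith : -lam ≤ lam),
    ← intervalIntegral.integral_add_adjacent_intervals h2 h1, hneg, key]
  ring

/-- Davies-type carré-du-champ bound: there exists `c > 0` such that for
all `β, λ > 0`, every `χ : ℝ^d → ℝ` with `|χ(η) − χ(ζ)| ≤ (β/3)|η − ζ|` (Euclidean
distance), and every `ξ ∈ ℝ^d`,
`Σ_{i=1}^d ∫_{|h| ≤ λ} (e^{χ(ξ+heᵢ)−χ(ξ)} − 1)² J(ξ, ξ+heᵢ) dh ≤ c e^{βλ}/φ(λ)`. -/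
theorem davies_carre_du_champ_bound
    (d : ℕ) (hd : 0 < d)
    (αl αu cl Cu Λ : ℝ)
    (hαl : 0 < αl) (hαlu : αl ≤ αu) (hαu : αu < 2)
    (hcl : 0 < cl) (hcl1 : cl ≤ 1) (hCu : 1 ≤ Cu) (hΛ : 1 < Λ)
    (φ : ℝ → ℝ)
    (hφ_mono : MonotoneOn φ (Ici 0))
    (hφ_pos : ∀ r : ℝ, 0 < r → 0 < φ r)
    (hWS : ∀ r R : ℝ, 0 < r → r ≤ R →
      cl * (R / r) ^ αl ≤ φ R / φ r ∧ φ R / φ r ≤ Cu * (R / r) ^ αu)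
    (J : (Fin d → ℝ) → (Fin d → ℝ) → ℝ)
    (hJmeas : Measurable (Function.uncurry J))
    (hJsymm : ∀ x y : Fin d → ℝ, J x y = J y x)
    (hJcomp : ∀ (x y : Fin d → ℝ) (i : Fin d), x i ≠ y i →
      (∀ j, j ≠ i → x j = y j) →
      Λ⁻¹ * (|x i - y i| * φ |x i - y i|)⁻¹ ≤ J x y ∧
      J x y ≤ Λ * (|x i - y i| * φ |x i - y i|)⁻¹)
    (hJzero : ∀ x y : Fin d → ℝ, x ≠ y →
      (¬ ∃ i, x i ≠ y i ∧ ∀ j, j ≠ i → x j = y j) → J x y = 0) :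
    ∃ c : ℝ, 0 < c ∧
      ∀ β lam : ℝ, 0 < β → 0 < lam →
      ∀ χ : (Fin d → ℝ) → ℝ,
        (∀ η ζ : Fin d → ℝ,
          |χ η - χ ζ| ≤ β / 3 * Real.sqrt (∑ i : Fin d, (η i - ζ i) ^ 2)) →
      ∀ ξ : Fin d → ℝ,
        ∑ i : Fin d, ∫⁻ h in {h : ℝ | |h| ≤ lam},
            ENNReal.ofReal
              ((Real.exp (χ (Function.update ξ i (ξ i + h)) - χ ξ) - 1) ^ 2
                * J ξ (Function.update ξ i (ξ i + h)))
          ≤ ENNReal.ofReal (c * Real.exp (β * lam) / φ lam) := by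
  have hΛ0 : (0:ℝ) < Λ := by linarith
  have hCu0 : (0:ℝ) < Cu := by linarith
  have h2a : (0:ℝ) < 2 - αu := by linarith
  refine ⟨8 * d * Λ * Cu / (2 - αu), by positivity, ?_⟩
  intro β lam hβ hl χ hχ ξ
  have hF : 0 < φ lam := hφ_pos lam hl
  set E2 : ℝ := Real.exp (2 * β / 3 * lam) with hE2def
  set K : ℝ := β ^ 2 / 9 * E2 * Λ * Cu * lam ^ αu / φ lam with hKdef
  have hK : 0 ≤ K := by
    have : (0:ℝ) < lam ^ αu := Real.rpow_pos_of_pos hl αu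
    have hE2pos : 0 < E2 := Real.exp_pos _
    positivity
  have hSet : {h : ℝ | |h| ≤ lam} = Icc (-lam) lam := by
    ext h; simp [abs_le]
  have hp : (-1:ℝ) < 1 - αu := by linarith
  -- pointwise bound
  have pointwise : ∀ i : Fin d, ∀ h ∈ Icc (-lam) lam,
      (Real.exp (χ (Function.update ξ i (ξ i + h)) - χ ξ) - 1) ^ 2
          * J ξ (Function.update ξ i (ξ i + h))
        ≤ K * |h| ^ (1 - αu) := by
    intro i h hh
    rcases eq_or_ne h 0 with rfl | hne
    · have h0 : Function.update ξ i (ξ i + 0) = ξ := by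
        rw [add_zero]; exact Function.update_eq_self i ξ
      rw [h0, sub_self, Real.exp_zero, sub_self]
      have : (0:ℝ) ≤ K * |(0:ℝ)| ^ (1 - αu) :=
        mul_nonneg hK (Real.rpow_nonneg (abs_nonneg _) _)
      simpa using this
    · set η : Fin d → ℝ := Function.update ξ i (ξ i + h) with hηdef
      have habs : 0 < |h| := abs_pos.2 hne
      have hhl : |h| ≤ lam := abs_le.2 ⟨hh.1, hh.2⟩
      have hφh := hφ_pos |h| habs
      have hsum : ∑ j : Fin d, (η j - ξ j) ^ 2 = h ^ 2 := by
        rw [Finset.sum_eq_single i]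
        · rw [hηdef, Function.update_self]; ring
        · intro j _ hj
          rw [hηdef, Function.update_of_ne hj]; ring
        · intro hi; exact absurd (Finset.mem_univ i) hi
      have hu : |χ η - χ ξ| ≤ β / 3 * |h| := by
        have := hχ η ξ
        rwa [hsum, Real.sqrt_sq_eq_abs] at this
      have hxi : ξ i ≠ η i := by
        rw [hηdef, Function.update_self]
        intro hc
        exact hne (by linarith)
      have hoff : ∀ j, j ≠ i → ξ j = η j := fun j hj =>
        (Function.update_of_ne hj _ _).symm
      have habs2 : |ξ i - η i| = |h| := by
        rw [hηdef, Function.update_self, show ξ i - (ξ i + h) = -h by ring, abs_neg]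
      have hJle : J ξ η ≤ Λ * (|h| * φ |h|)⁻¹ := by
        have := (hJcomp ξ η i hxi hoff).2
        rwa [habs2] at this
      have hJnn : 0 ≤ J ξ η := by
        have hlow := (hJcomp ξ η i hxi hoff).1
        rw [habs2] at hlow
        refine le_trans ?_ hlow
        exact mul_nonneg (inv_nonneg.2 hΛ0.le)
          (inv_nonneg.2 (mul_nonneg habs.le hφh.le))
      -- step 1
      have h1 : (χ η - χ ξ) ^ 2 ≤ (β / 3) ^ 2 * h ^ 2 := by
        calc (χ η - χ ξ) ^ 2 = |χ η - χ ξ| ^ 2 := (sq_abs _).symm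
          _ ≤ (β / 3 * |h|) ^ 2 := pow_le_pow_left₀ (abs_nonneg _) hu 2
          _ = (β / 3) ^ 2 * h ^ 2 := by rw [mul_pow, sq_abs]
      have h2 : Real.exp (2 * |χ η - χ ξ|) ≤ E2 := by
        rw [hE2def]
        apply Real.exp_le_exp.2
        have hb3 : β / 3 * |h| ≤ β / 3 * lam :=
          mul_le_mul_of_nonneg_left hhl (by positivity)
        have := hu.trans hb3
        linarith
      have step1 : (Real.exp (χ η - χ ξ) - 1) ^ 2 ≤ (β / 3) ^ 2 * h ^ 2 * E2 := by
        refine (sq_exp_sub_one_le (χ η - χ ξ)).trans ?_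
        apply mul_le_mul h1 h2 (Real.exp_pos _).le (by positivity)
      -- step 2
      have hD : (φ |h|)⁻¹ ≤ Cu * (lam / |h|) ^ αu / φ lam := by
        have hws := (hWS |h| lam habs hhl).2
        rw [div_le_iff₀ hφh] at hws
        rw [inv_eq_one_div, div_le_div_iff₀ hφh hF, one_mul]
        exact hws
      have step2 : J ξ η ≤ Λ * |h|⁻¹ * (Cu * (lam / |h|) ^ αu / φ lam) := by
        refine hJle.trans ?_
        rw [mul_inv, ← mul_assoc]
        exact mul_le_mul_of_nonneg_left hD
          (mul_nonneg hΛ0.le (inv_nonneg.2 (abs_nonneg _)))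
      -- combine
      have hpow : h ^ 2 * |h|⁻¹ * (lam / |h|) ^ αu = lam ^ αu * |h| ^ (1 - αu) := by
        have e1 : |h| ^ (1 - αu) = |h| / |h| ^ αu := by
          rw [Real.rpow_sub habs, Real.rpow_one]
        have e2 : (lam / |h|) ^ αu = lam ^ αu / |h| ^ αu :=
          Real.div_rpow hl.le (abs_nonneg h) αu
        have hne1 : |h| ≠ 0 := habs.ne'
        have hne2 : |h| ^ αu ≠ 0 := (Real.rpow_pos_of_pos habs αu).ne'
        rw [e1, e2]
        field_simp
        rw [← sq_abs h]
      calc (Real.exp (χ η - χ ξ) - 1) ^ 2 * J ξ η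
          ≤ ((β / 3) ^ 2 * h ^ 2 * E2) * (Λ * |h|⁻¹ * (Cu * (lam / |h|) ^ αu / φ lam)) := by
            apply mul_le_mul step1 step2 hJnn (by positivity)
        _ = K * |h| ^ (1 - αu) := by
            rw [hKdef]
            linear_combination (β ^ 2 / 9 * E2 * Λ * Cu / φ lam) * hpow
  -- per-coordinate integral bound
  set B : ℝ := K * (2 * (lam ^ (1 - αu + 1) / (1 - αu + 1))) with hBdef
  have hB : 0 ≤ B := by
    have : (0:ℝ) < lam ^ (1 - αu + 1) := Real.rpow_pos_of_pos hl _
    have h1a : (0:ℝ) < 1 - αu + 1 := by linarith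
    positivity
  have percoord : ∀ i : Fin d,
      (∫⁻ h in Icc (-lam) lam,
        ENNReal.ofReal
          ((Real.exp (χ (Function.update ξ i (ξ i + h)) - χ ξ) - 1) ^ 2
            * J ξ (Function.update ξ i (ξ i + h))))
        ≤ ENNReal.ofReal B := by
    intro i
    have hgmeas : Measurable fun h : ℝ => ENNReal.ofReal (K * |h| ^ (1 - αu)) := by
      have : Measurable fun h : ℝ => K * |h| ^ (1 - αu) := by fun_prop
      exact this.ennreal_ofReal
    have hmono := setLIntegral_mono (μ := volume) hgmeas
      (fun h hh => ENNReal.ofReal_le_ofReal (pointwise i h hh))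
    refine hmono.trans ?_
    have hint : IntegrableOn (fun h : ℝ => K * |h| ^ (1 - αu)) (Icc (-lam) lam) :=
      (integrableOn_abs_rpow_Icc hp hl).const_mul K
    have hnn : 0 ≤ᵐ[volume.restrict (Icc (-lam) lam)]
        fun h : ℝ => K * |h| ^ (1 - αu) :=
      Filter.Eventually.of_forall fun h =>
        mul_nonneg hK (Real.rpow_nonneg (abs_nonneg _) _)
    rw [← ofReal_integral_eq_lintegral_ofReal hint hnn]
    apply ENNReal.ofReal_le_ofReal
    rw [MeasureTheory.integral_const_mul, integral_abs_rpow_Icc hp hl, hBdef]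
  -- sum up
  have hsumle : ∑ i : Fin d, ∫⁻ h in {h : ℝ | |h| ≤ lam},
      ENNReal.ofReal
        ((Real.exp (χ (Function.update ξ i (ξ i + h)) - χ ξ) - 1) ^ 2
          * J ξ (Function.update ξ i (ξ i + h)))
      ≤ (d : ℝ≥0∞) * ENNReal.ofReal B := by
    simp only [hSet]
    calc _ ≤ ∑ _i : Fin d, ENNReal.ofReal B :=
          Finset.sum_le_sum fun i _ => percoord i
      _ = (d : ℝ≥0∞) * ENNReal.ofReal B := by
          rw [Finset.sum_const, Finset.card_univ, Fintype.card_fin, nsmul_eq_mul]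
  refine hsumle.trans ?_
  rw [← ENNReal.ofReal_natCast d, ← ENNReal.ofReal_mul (Nat.cast_nonneg d)]
  apply ENNReal.ofReal_le_ofReal
  -- final real inequality
  have hlam2 : lam ^ αu * lam ^ (1 - αu + 1) = lam ^ (2:ℕ) := by
    rw [← Real.rpow_natCast lam 2, ← Real.rpow_add hl]
    congr 1
    push_cast
    ring
  have heq : (d:ℝ) * B = (2 * d * Λ * Cu / (9 * (2 - αu)))
      * (β ^ 2 * (lam ^ αu * lam ^ (1 - αu + 1)) * E2) / φ lam := by
    rw [hBdef, hKdef]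
    have h1a : (1:ℝ) - αu + 1 = 2 - αu := by ring
    rw [h1a]
    field_simp
  have h36 : (β * lam) ^ 2 ≤ 36 * Real.exp (β * lam / 3) := by
    have e1 := Real.add_one_le_exp (β * lam / 6)
    have e2 : Real.exp (β * lam / 6) * Real.exp (β * lam / 6)
        = Real.exp (β * lam / 3) := by
      rw [← Real.exp_add]; ring_nf
    nlinarith [mul_pos hβ hl, Real.exp_pos (β * lam / 6)]
  have hexp : β ^ 2 * lam ^ (2:ℕ) * E2 ≤ 36 * Real.exp (β * lam) := by
    have e3 : Real.exp (β * lam / 3) * E2 = Real.exp (β * lam) := by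
      rw [hE2def, ← Real.exp_add]; ring_nf
    have hE2pos : (0:ℝ) < E2 := Real.exp_pos _
    calc β ^ 2 * lam ^ (2:ℕ) * E2 = (β * lam) ^ 2 * E2 := by ring
      _ ≤ (36 * Real.exp (β * lam / 3)) * E2 :=
          mul_le_mul_of_nonneg_right h36 hE2pos.le
      _ = 36 * Real.exp (β * lam) := by rw [mul_assoc, e3]
  rw [heq, hlam2]
  rw [div_le_div_iff₀ hF hF]
  have hc0 : (0:ℝ) ≤ 2 * d * Λ * Cu / (9 * (2 - αu)) := by positivity
  refine le_trans (mul_le_mul_of_nonneg_right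
    (mul_le_mul_of_nonneg_left hexp hc0) hF.le) (le_of_eq ?_)
  field_simp
  ring
end

section
/- Reduction lemma: let d ≥ 1, l ∈ {0,…,d−1}, q ≥ 0 and C > 0. There exists a constant c > 0, depending only on l, q, d, C and the constants in (WS), with the following property. Let t > 0, set κ := φ⁻¹(t), let 0 ≤ s₁ ≤ s₂ ≤ … ≤ s_d be real numbers with s_{d−l} < (5/2)κ, and define F_i := min(1, t κ/(s_i φ(s_i))) for s_i > 0 and F_i := 1 for s_i = 0. Then every real number P ≥ 0 satisfying P ≤ C κ^{−d} ∏_{i=1}^{d−l} F_i^q · ∏_{i=d−l+1}^{d} F_i also satisfies P ≤ c κ^{−d} ∏_{i=1}^{d} F_i. -/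
open Set

/-- The heat-kernel factor `F = min(1, t κ/(s φ(s)))`, interpreted as `1` when `s = 0`. -/
noncomputable def redFactor (φ : ℝ → ℝ) (t κ s : ℝ) : ℝ :=
  if s = 0 then 1 else min 1 (t * κ / (s * φ s))

/-- Reduction lemma: there exists `c > 0` (depending only on
`l, q, d, C` and the constants in **(WS)**) such that whenever `t > 0`, `κ = φ⁻¹(t)`,
`0 ≤ s₁ ≤ … ≤ s_d` with `s_{d−l} < (5/2)κ`, every `P ≥ 0` satisfying
`P ≤ C κ^{−d} ∏_{i=1}^{d−l} F_i^q ∏_{i=d−l+1}^d F_i` also satisfies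
`P ≤ c κ^{−d} ∏_{i=1}^d F_i`. -/
theorem reduction_lemma
    (d l : ℕ) (hd : 0 < d) (hl : l ≤ d - 1)
    (q C : ℝ) (hq : 0 ≤ q) (hC : 0 < C)
    (αl αu cl Cu : ℝ)
    (hαl : 0 < αl) (hαlu : αl ≤ αu) (hαu : αu < 2)
    (hcl : 0 < cl) (hcl1 : cl ≤ 1) (hCu : 1 ≤ Cu)
    (φ : ℝ → ℝ)
    (hφ0 : φ 0 = 0)
    (hφ_pos : ∀ r : ℝ, 0 < r → 0 < φ r)
    (hφ_smono : StrictMonoOn φ (Ici 0))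
    (hφ_cont : ContinuousOn φ (Ici 0))
    (hφ_surj : ∀ y : ℝ, 0 ≤ y → ∃ r : ℝ, 0 ≤ r ∧ φ r = y)
    (hWS : ∀ r R : ℝ, 0 < r → r ≤ R →
      cl * (R / r) ^ αl ≤ φ R / φ r ∧ φ R / φ r ≤ Cu * (R / r) ^ αu)
    (φinv : ℝ → ℝ)
    (hφinv_nonneg : ∀ t : ℝ, 0 ≤ t → 0 ≤ φinv t)
    (hφinv_left : ∀ r : ℝ, 0 ≤ r → φinv (φ r) = r)
    (hφinv_right : ∀ t : ℝ, 0 ≤ t → φ (φinv t) = t) :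
    ∃ c : ℝ, 0 < c ∧
      ∀ t : ℝ, 0 < t →
      ∀ s : Fin d → ℝ, (∀ i, 0 ≤ s i) → (∀ i j : Fin d, i ≤ j → s i ≤ s j) →
        s ⟨d - l - 1, by omega⟩ < 5 / 2 * φinv t →
      ∀ P : ℝ, 0 ≤ P →
        P ≤ C * (φinv t ^ d)⁻¹ *
            ((∏ i ∈ Finset.univ.filter (fun i : Fin d => (i : ℕ) < d - l),
                redFactor φ t (φinv t) (s i) ^ q) *
              ∏ i ∈ Finset.univ.filter (fun i : Fin d => d - l ≤ (i : ℕ)),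
                redFactor φ t (φinv t) (s i)) →
        P ≤ c * (φinv t ^ d)⁻¹ * ∏ i : Fin d, redFactor φ t (φinv t) (s i) := by

  have hαu0 : (0:ℝ) < αu := lt_of_lt_of_le hαl hαlu
  have hCu0 : (0:ℝ) < Cu := lt_of_lt_of_le zero_lt_one hCu
  set M : ℝ := (5/2 : ℝ) ^ αu * Cu * (5/2) with hMdef
  have hrp : (0:ℝ) < (5/2 : ℝ) ^ αu := Real.rpow_pos_of_pos (by norm_num) _
  have hrp1 : (1:ℝ) ≤ (5/2 : ℝ) ^ αu := by
    have := Real.rpow_le_rpow_of_exponent_le (by norm_num : (1:ℝ) ≤ 5/2) hαu0.le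
    rwa [Real.rpow_zero] at this
  have hMpos : 0 < M := by rw [hMdef]; positivity
  have hM1 : 1 ≤ M := by nlinarith
  have hMi1 : M⁻¹ ≤ 1 := by
    rw [inv_le_one_iff₀]; right; exact hM1
  have hMinn : (0:ℝ) ≤ M⁻¹ := inv_nonneg.2 hMpos.le
  refine ⟨C * M ^ d, by positivity, ?_⟩
  intro t ht s hs0 hsmono hslt P hP hPle
  set κ := φinv t with hκdef
  have hκ0 : 0 ≤ κ := hφinv_nonneg t ht.le
  have hφκ : φ κ = t := by rw [hκdef]; exact hφinv_right t ht.le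
  have hκpos : 0 < κ := by
    rcases hκ0.lt_or_eq with h | h
    · exact h
    · exfalso; rw [← h, hφ0] at hφκ; exact ht.ne' hφκ.symm
  -- bounds on redFactor
  have hFnn : ∀ x : ℝ, 0 ≤ x → 0 ≤ redFactor φ t κ x := by
    intro x hx
    unfold redFactor
    split_ifs with h
    · norm_num
    · have hx' : 0 < x := hx.lt_of_ne (Ne.symm h)
      have hφx : 0 < φ x := hφ_pos x hx'
      exact le_min zero_le_one (by positivity)
  have hFle1 : ∀ x : ℝ, redFactor φ t κ x ≤ 1 := by
    intro x; unfold redFactor; split_ifs with h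
    · exact le_refl 1
    · exact min_le_left _ _
  have hFlow : ∀ x : ℝ, 0 ≤ x → x < 5/2 * κ → M⁻¹ ≤ redFactor φ t κ x := by
    intro x hx hxlt
    unfold redFactor
    split_ifs with h
    · exact hMi1
    · refine le_min hMi1 ?_
      have hx' : 0 < x := hx.lt_of_ne (Ne.symm h)
      have hφx : 0 < φ x := hφ_pos x hx'
      have h52 : κ ≤ 5/2 * κ := by linarith
      have hWS2 := (hWS κ (5/2*κ) hκpos h52).2
      have hratio : (5/2*κ)/κ = 5/2 := by field_simp
      rw [hratio, hφκ] at hWS2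
      have hφ52 : φ (5/2*κ) ≤ Cu * (5/2:ℝ)^αu * t := by
        rw [div_le_iff₀ ht] at hWS2; linarith
      have hmono : φ x ≤ φ (5/2*κ) :=
        hφ_smono.monotoneOn (mem_Ici.2 hx) (mem_Ici.2 (by positivity)) hxlt.le
      have hxφ : x * φ x ≤ M * (κ * t) := by
        have h1 : x * φ x ≤ (5/2*κ) * φ (5/2*κ) :=
          mul_le_mul hxlt.le hmono hφx.le (by positivity)
        have h2 : (5/2*κ) * φ (5/2*κ) ≤ (5/2*κ) * (Cu * (5/2:ℝ)^αu * t) := by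
          have : (0:ℝ) ≤ 5/2*κ := by positivity
          exact mul_le_mul_of_nonneg_left hφ52 this
        have h3 : (5/2*κ) * (Cu * (5/2:ℝ)^αu * t) = M * (κ * t) := by
          rw [hMdef]; ring
        linarith
      rw [le_div_iff₀ (by positivity : (0:ℝ) < x * φ x)]
      have h4 : M⁻¹ * (x * φ x) ≤ M⁻¹ * (M * (κ * t)) :=
        mul_le_mul_of_nonneg_left hxφ hMinn
      have h5 : M⁻¹ * (M * (κ * t)) = t * κ := by
        field_simp
      linarith
  -- products
  set F : Fin d → ℝ := fun i => redFactor φ t κ (s i) with hFdef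
  set head := Finset.univ.filter (fun i : Fin d => (i:ℕ) < d - l) with hheaddef
  set tail := Finset.univ.filter (fun i : Fin d => d - l ≤ (i:ℕ)) with htaildef
  have hsplit : (∏ i : Fin d, F i) = (∏ i ∈ head, F i) * ∏ i ∈ tail, F i := by
    rw [hheaddef, htaildef,
      ← Finset.prod_filter_mul_prod_filter_not Finset.univ (fun i : Fin d => (i:ℕ) < d-l) F]
    congr 1
    apply Finset.prod_congr _ (fun _ _ => rfl)
    ext i; simp [not_lt]
  have hheadlt : ∀ i ∈ head, s i < 5/2 * κ := by
    intro i hi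
    rw [hheaddef, Finset.mem_filter] at hi
    have hile : i ≤ (⟨d - l - 1, by omega⟩ : Fin d) := by
      have h2 := hi.2
      rw [Fin.le_def]
      show (i:ℕ) ≤ d - l - 1
      omega
    exact lt_of_le_of_lt (hsmono i _ hile) hslt
  have hA : (∏ i ∈ head, F i ^ q) ≤ 1 :=
    Finset.prod_le_one (fun i _ => Real.rpow_nonneg (hFnn _ (hs0 i)) q)
      (fun i _ => Real.rpow_le_one (hFnn _ (hs0 i)) (hFle1 _) hq)
  have hHcard : head.card ≤ d := by
    calc head.card ≤ Finset.univ.card := Finset.card_filter_le _ _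
      _ = d := by simp
  have hH : M⁻¹ ^ d ≤ ∏ i ∈ head, F i := by
    calc M⁻¹ ^ d ≤ M⁻¹ ^ head.card := pow_le_pow_of_le_one hMinn hMi1 hHcard
      _ = ∏ _i ∈ head, M⁻¹ := (Finset.prod_const _).symm
      _ ≤ ∏ i ∈ head, F i :=
        Finset.prod_le_prod (fun i _ => hMinn) (fun i hi => hFlow _ (hs0 i) (hheadlt i hi))
  have hB : 0 ≤ ∏ i ∈ tail, F i := Finset.prod_nonneg (fun i _ => hFnn _ (hs0 i))
  have hMM : M ^ d * M⁻¹ ^ d = 1 := by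
    rw [← mul_pow, mul_inv_cancel₀ hMpos.ne', one_pow]
  have hhead1 : (1:ℝ) ≤ M ^ d * ∏ i ∈ head, F i := by
    calc (1:ℝ) = M ^ d * M⁻¹ ^ d := hMM.symm
      _ ≤ M ^ d * ∏ i ∈ head, F i :=
        mul_le_mul_of_nonneg_left hH (pow_pos hMpos d).le
  have hkey : (∏ i ∈ head, F i ^ q) * (∏ i ∈ tail, F i)
      ≤ M ^ d * ((∏ i ∈ head, F i) * ∏ i ∈ tail, F i) := by
    have h1 : (∏ i ∈ head, F i ^ q) ≤ M ^ d * ∏ i ∈ head, F i := hA.trans hhead1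
    calc (∏ i ∈ head, F i ^ q) * (∏ i ∈ tail, F i)
        ≤ (M ^ d * ∏ i ∈ head, F i) * ∏ i ∈ tail, F i :=
          mul_le_mul_of_nonneg_right h1 hB
      _ = M ^ d * ((∏ i ∈ head, F i) * ∏ i ∈ tail, F i) := by ring
  have hnn : (0:ℝ) ≤ C * (κ ^ d)⁻¹ := by positivity
  calc P ≤ C * (κ ^ d)⁻¹ *
        ((∏ i ∈ head, F i ^ q) * ∏ i ∈ tail, F i) := hPle
    _ ≤ C * (κ ^ d)⁻¹ * (M ^ d * ((∏ i ∈ head, F i) * ∏ i ∈ tail, F i)) :=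
        mul_le_mul_of_nonneg_left hkey hnn
    _ = C * M ^ d * (κ ^ d)⁻¹ * ((∏ i ∈ head, F i) * ∏ i ∈ tail, F i) := by ring
    _ = C * M ^ d * (κ ^ d)⁻¹ * ∏ i : Fin d, F i := by rw [hsplit]
end

section
/- Combinatorial core of the bootstrap step (Lemma Gl): let d ≥ 2, l ∈ {0,…,d−2}, i₀ ∈ {1,…,d−l−1}, let q ∈ [0, 1/(1+α̲)], set b₀ := α̲/(α̲+1) and θ := (α̲/(2+α̲+α̅)) · (Σ_{i=1}^{d−l−i₀} ((α̅+1)/α̲)^i)^{−1}. Then there exists a constant c > 0, depending only on d, q, α̲, α̅, c̲, C̄, such that for every κ > 0 and all integers 1 ≤ n_{i₀} ≤ n_{i₀+1} ≤ … ≤ n_{d−l}, there is an index j₀ ∈ {i₀,…,d−l} with 𝔑(n_{j₀})^{b₀+q} · ∏_{j=j₀+1}^{d−l} 𝔑(n_j)^q ≤ c ∏_{j=i₀}^{d−l} 𝔑(n_j)^{q+θ}, where 𝔑(δ) := φ(κ)/(2^δ φ(2^δ κ)) and empty products equal 1. -/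
open Set

/-- `𝔑(δ) = φ(κ)/(2^δ φ(2^δ κ))`. -/
noncomputable def NNscale (φ : ℝ → ℝ) (κ : ℝ) (δ : ℕ) : ℝ :=
  φ κ / (2 ^ δ * φ (2 ^ δ * κ))

private lemma geom_Icc_sum (r : ℝ) (m : ℕ) :
    ∀ k, k ≤ m + 1 →
      ∑ j ∈ Finset.Icc (m + 1 - k) m, r ^ (m - j) = ∑ t ∈ Finset.range k, r ^ t := by
  intro k
  induction k with
  | zero => intro _; simp
  | succ k ih =>
    intro hk
    have h1 : m + 1 - (k + 1) = m - k := by omega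
    have h2 : m - k ≤ m := by omega
    have h3 : Finset.Ioc (m - k) m = Finset.Icc (m - k + 1) m := (Finset.Icc_add_one_left_eq_Ioc _ _).symm
    have h4 : m - k + 1 = m + 1 - k := by omega
    have h5 : m - (m - k) = k := by omega
    rw [h1, Finset.Icc_eq_cons_Ioc h2, Finset.sum_cons, h3, h4, ih (by omega), h5,
      Finset.sum_range_succ]
    ring

private lemma icc_shift (ρ : ℝ) : ∀ K : ℕ, ∑ i ∈ Finset.Icc 1 K, ρ ^ i = ∑ t ∈ Finset.range K, ρ ^ (t + 1) := by
  intro K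
  induction K with
  | zero => simp
  | succ K ih =>
    rw [Finset.sum_Icc_succ_top (by omega), ih, Finset.sum_range_succ]

set_option maxHeartbeats 2000000 in
/-- Combinatorial core of the bootstrap step (Lemma Gl): with
`b₀ = α̲/(α̲+1)` and `θ = (α̲/(2+α̲+α̅)) (Σ_{i=1}^{d−l−i₀} ((α̅+1)/α̲)^i)⁻¹`, there exists a
constant `c > 0` such that for every `κ > 0` and all integers
`1 ≤ n_{i₀} ≤ … ≤ n_{d−l}` there is `j₀ ∈ {i₀,…,d−l}` with
`𝔑(n_{j₀})^{b₀+q} ∏_{j=j₀+1}^{d−l} 𝔑(n_j)^q ≤ c ∏_{j=i₀}^{d−l} 𝔑(n_j)^{q+θ}`. -/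
theorem bootstrap_combinatorial_core
    (d l i₀ : ℕ) (hd : 2 ≤ d) (hl : l ≤ d - 2) (hi₀ : 1 ≤ i₀) (hi₀' : i₀ ≤ d - l - 1)
    (αl αu cl Cu : ℝ)
    (hαl : 0 < αl) (hαlu : αl ≤ αu) (hαu : αu < 2)
    (hcl : 0 < cl) (hcl1 : cl ≤ 1) (hCu : 1 ≤ Cu)
    (φ : ℝ → ℝ)
    (hφ_mono : MonotoneOn φ (Ici 0))
    (hφ_pos : ∀ r : ℝ, 0 < r → 0 < φ r)
    (hWS : ∀ r R : ℝ, 0 < r → r ≤ R →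
      cl * (R / r) ^ αl ≤ φ R / φ r ∧ φ R / φ r ≤ Cu * (R / r) ^ αu)
    (q : ℝ) (hq0 : 0 ≤ q) (hq1 : q ≤ 1 / (1 + αl)) :
    ∃ c : ℝ, 0 < c ∧
      ∀ κ : ℝ, 0 < κ →
      ∀ n : ℕ → ℕ, 1 ≤ n i₀ →
        (∀ j k : ℕ, i₀ ≤ j → j ≤ k → k ≤ d - l → n j ≤ n k) →
        ∃ j₀ : ℕ, i₀ ≤ j₀ ∧ j₀ ≤ d - l ∧
          NNscale φ κ (n j₀) ^ (αl / (αl + 1) + q) *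
              ∏ j ∈ Finset.Icc (j₀ + 1) (d - l), NNscale φ κ (n j) ^ q
            ≤ c * ∏ j ∈ Finset.Icc i₀ (d - l),
                NNscale φ κ (n j) ^
                  (q + αl / (2 + αl + αu) *
                    (∑ i ∈ Finset.Icc 1 (d - l - i₀), ((αu + 1) / αl) ^ i)⁻¹) := by
  set m := d - l with hm
  have him : i₀ + 1 ≤ m := by omega
  set K := m - i₀ with hKdef
  have hK1 : 1 ≤ K := by omega
  have hKd : K + 1 ≤ d := by omega
  set b₀ := αl / (αl + 1) with hb₀def
  have hαl1 : (0:ℝ) < αl + 1 := by linarith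
  have hb₀pos : 0 < b₀ := div_pos hαl hαl1
  have hb₀ne : b₀ ≠ 0 := ne_of_gt hb₀pos
  have hb₀le1 : b₀ ≤ 1 := by rw [hb₀def, div_le_one hαl1]; linarith
  set ρ := (αu + 1) / αl with hρdef
  have hρ1 : 1 ≤ ρ := by rw [hρdef, le_div_iff₀ hαl]; linarith
  set S := ∑ i ∈ Finset.Icc 1 K, ρ ^ i with hSdef
  have hρpow : ∀ i : ℕ, (0:ℝ) ≤ ρ ^ i := fun i => pow_nonneg (by linarith) i
  have hS1 : 1 ≤ S := by
    have h1 : (1:ℕ) ∈ Finset.Icc 1 K := by simp [Finset.mem_Icc]; omega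
    have h2 := Finset.single_le_sum (f := fun i => ρ ^ i) (fun i _ => hρpow i) h1
    calc (1:ℝ) ≤ ρ := hρ1
      _ = ρ ^ 1 := (pow_one ρ).symm
      _ ≤ S := h2
  have hSpos : 0 < S := lt_of_lt_of_le one_pos hS1
  have h2aa : (0:ℝ) < 2 + αl + αu := by linarith
  set θ := αl / (2 + αl + αu) * S⁻¹ with hθdef
  have hθpos : 0 < θ := mul_pos (div_pos hαl h2aa) (inv_pos.mpr hSpos)
  set r := 1 + q / b₀ with hrdef
  have hr1 : 1 ≤ r := by
    have := div_nonneg hq0 hb₀pos.le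
    rw [hrdef]; linarith
  have hr0 : (0:ℝ) ≤ r := by linarith
  have hrρ : r ≤ ρ := by
    have hq2 : q * (1 + αl) ≤ 1 := by
      calc q * (1 + αl) ≤ (1 / (1 + αl)) * (1 + αl) := by
            apply mul_le_mul_of_nonneg_right hq1 (by linarith)
        _ = 1 := by field_simp
    have hq' : q / b₀ ≤ 1 / αl := by
      rw [div_le_div_iff₀ hb₀pos hαl, hb₀def, one_mul, le_div_iff₀ hαl1]
      nlinarith
    have h12 : 1 + 1 / αl = (αl + 1) / αl := by field_simp
    calc r = 1 + q / b₀ := hrdef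
      _ ≤ 1 + 1 / αl := by linarith
      _ = (αl + 1) / αl := h12
      _ ≤ ρ := by rw [hρdef]; gcongr
  -- key inequality
  have hsum_split : ∑ t ∈ Finset.range (K + 1), r ^ t
      = (∑ t ∈ Finset.range K, r ^ (t + 1)) + 1 := by
    rw [Finset.sum_range_succ']; simp
  have hrange_le : ∑ t ∈ Finset.range K, r ^ (t + 1) ≤ S := by
    rw [hSdef, icc_shift]
    exact Finset.sum_le_sum fun i _ => pow_le_pow_left₀ hr0 hrρ _
  have hSumPos : (0:ℝ) ≤ ∑ t ∈ Finset.range (K + 1), r ^ t :=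
    Finset.sum_nonneg fun t _ => pow_nonneg hr0 t
  have hkey : θ * ∑ t ∈ Finset.range (K + 1), r ^ t ≤ b₀ := by
    have h2S : ∑ t ∈ Finset.range (K + 1), r ^ t ≤ 2 * S := by
      rw [hsum_split]; linarith
    have h3 : θ * (2 * S) = 2 * (αl / (2 + αl + αu)) := by
      rw [hθdef]; field_simp
    have h4 : 2 * (αl / (2 + αl + αu)) ≤ b₀ := by
      rw [hb₀def, mul_div_assoc', div_le_div_iff₀ h2aa hαl1]
      nlinarith
    calc θ * ∑ t ∈ Finset.range (K + 1), r ^ t ≤ θ * (2 * S) :=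
          mul_le_mul_of_nonneg_left h2S hθpos.le
      _ = 2 * (αl / (2 + αl + αu)) := h3
      _ ≤ b₀ := h4
  -- the weights
  set w : ℕ → ℝ := fun j =>
    if j = i₀ then 1 - θ / b₀ * ∑ t ∈ Finset.range K, r ^ t
    else θ / b₀ * r ^ (m - j) with hwdef
  have hθb : 0 ≤ θ / b₀ := div_nonneg hθpos.le hb₀pos.le
  have hTle : ∑ t ∈ Finset.range K, r ^ t ≤ ∑ t ∈ Finset.range (K + 1), r ^ t := by
    apply Finset.sum_le_sum_of_subset_of_nonneg
    · exact Finset.range_subset_range.mpr (by omega)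
    · intro t _ _; exact pow_nonneg hr0 t
  have hθT : θ / b₀ * ∑ t ∈ Finset.range K, r ^ t ≤ 1 := by
    rw [div_mul_eq_mul_div, div_le_one hb₀pos]
    calc θ * ∑ t ∈ Finset.range K, r ^ t ≤ θ * ∑ t ∈ Finset.range (K + 1), r ^ t :=
          mul_le_mul_of_nonneg_left hTle hθpos.le
      _ ≤ b₀ := hkey
  have hw_nonneg : ∀ j, 0 ≤ w j := by
    intro j
    rw [hwdef]
    by_cases h : j = i₀
    · simp only [h, eq_self_iff_true, if_true]; linarith
    · simp only [if_neg h]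
      exact mul_nonneg hθb (pow_nonneg hr0 _)
  have hWgt : ∀ j, i₀ ≤ j → j ≤ m →
      ∑ j₀ ∈ Finset.Icc (j + 1) m, w j₀ = θ / b₀ * ∑ t ∈ Finset.range (m - j), r ^ t := by
    intro j hj1 hj2
    have step1 : ∀ j₀ ∈ Finset.Icc (j + 1) m, w j₀ = θ / b₀ * r ^ (m - j₀) := by
      intro j₀ hj₀
      rw [Finset.mem_Icc] at hj₀
      rw [hwdef]
      simp only [if_neg (by omega : ¬ j₀ = i₀)]
    rw [Finset.sum_congr rfl step1, ← Finset.mul_sum]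
    congr 1
    have h5 : j + 1 = m + 1 - (m - j) := by omega
    rw [h5]
    exact geom_Icc_sum r m (m - j) (by omega)
  have hW_nonneg : ∀ j, 0 ≤ ∑ j₀ ∈ Finset.Icc (j + 1) m, w j₀ :=
    fun j => Finset.sum_nonneg fun j₀ _ => hw_nonneg j₀
  have hmK : m - i₀ = K := by omega
  have hWsum : ∑ j ∈ Finset.Icc i₀ m, w j = 1 := by
    rw [Finset.Icc_eq_cons_Ioc (by omega : i₀ ≤ m), Finset.sum_cons, ← Finset.Icc_add_one_left_eq_Ioc,
      hWgt i₀ le_rfl (by omega), hmK, hwdef]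
    simp only [eq_self_iff_true, if_true]
    ring
  have hrsub : q / b₀ = r - 1 := by rw [hrdef]; ring
  have hFj : ∀ j, i₀ < j → j ≤ m →
      b₀ * w j - q * ∑ j₀ ∈ Finset.Icc (j + 1) m, w j₀ - θ = 0 := by
    intro j hj1 hj2
    rw [hWgt j (by omega) hj2, hwdef]
    simp only [if_neg (by omega : ¬ j = i₀)]
    have hgs : (∑ t ∈ Finset.range (m - j), r ^ t) * (r - 1) = r ^ (m - j) - 1 :=
      geom_sum_mul r (m - j)
    have e1 : b₀ * (θ / b₀ * r ^ (m - j)) = θ * r ^ (m - j) := by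
      field_simp
    have e2 : q * (θ / b₀ * ∑ t ∈ Finset.range (m - j), r ^ t)
        = θ * ((∑ t ∈ Finset.range (m - j), r ^ t) * (r - 1)) := by
      rw [← hrsub]; simp only [div_eq_mul_inv]; ring
    rw [e1, e2, hgs]; ring
  have hFi₀ : b₀ * w i₀ - q * ∑ j₀ ∈ Finset.Icc (i₀ + 1) m, w j₀ - θ
      = b₀ - θ * ∑ t ∈ Finset.range (K + 1), r ^ t := by
    rw [hWgt i₀ le_rfl (by omega), hmK, hwdef]
    simp only [eq_self_iff_true, if_true]
    rw [hsum_split]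
    have hmul : ∑ t ∈ Finset.range K, r ^ (t + 1) = r * ∑ t ∈ Finset.range K, r ^ t := by
      rw [Finset.mul_sum]
      exact Finset.sum_congr rfl fun t _ => by ring
    rw [hmul, hrdef]
    field_simp
    ring
  have hF0 : ∀ j, i₀ ≤ j → j ≤ m →
      θ + q * ∑ j₀ ∈ Finset.Icc (j + 1) m, w j₀ ≤ b₀ * w j := by
    intro j hj1 hj2
    rcases eq_or_lt_of_le hj1 with h | h
    · rw [← h]
      have h6 := hFi₀
      have h7 := hkey
      linarith
    · have h6 := hFj j h hj2
      linarith
  have hF1 : ∀ j, i₀ ≤ j → j ≤ m →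
      b₀ * w j - q * ∑ j₀ ∈ Finset.Icc (j + 1) m, w j₀ - θ ≤ 1 := by
    intro j hj1 hj2
    rcases eq_or_lt_of_le hj1 with h | h
    · rw [← h]
      have h6 := hFi₀
      have h7 : 0 ≤ θ * ∑ t ∈ Finset.range (K + 1), r ^ t := mul_nonneg hθpos.le hSumPos
      linarith
    · have h6 := hFj j h hj2
      linarith
  have hwi₀pos : 0 < w i₀ := by
    have h6 := hF0 i₀ le_rfl (by omega)
    have h7 : 0 ≤ q * ∑ j₀ ∈ Finset.Icc (i₀ + 1) m, w j₀ := mul_nonneg hq0 (hW_nonneg i₀)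
    have h8 : b₀ * w i₀ ≤ w i₀ := mul_le_of_le_one_left (hw_nonneg i₀) hb₀le1
    linarith
  -- constant and main claim
  refine ⟨cl⁻¹ ^ d, by positivity, ?_⟩
  intro κ hκ n hn1 hmono
  have hNpos : ∀ δ : ℕ, 0 < NNscale φ κ δ := by
    intro δ
    have h2 : (0:ℝ) < 2 ^ δ := by positivity
    exact div_pos (hφ_pos κ hκ) (mul_pos h2 (hφ_pos _ (by positivity)))
  have hNle : ∀ δ : ℕ, NNscale φ κ δ ≤ cl⁻¹ := by
    intro δ
    have h2 : (1:ℝ) ≤ 2 ^ δ := one_le_pow₀ (by norm_num)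
    have hκ2 : κ ≤ 2 ^ δ * κ := le_mul_of_one_le_left hκ.le h2
    obtain ⟨hlow, -⟩ := hWS κ (2 ^ δ * κ) hκ hκ2
    have hdiv : (2 ^ δ * κ) / κ = (2:ℝ) ^ δ := by field_simp
    rw [hdiv] at hlow
    have hpow1 : (1:ℝ) ≤ ((2:ℝ) ^ δ) ^ αl := by
      calc (1:ℝ) = 1 ^ αl := (Real.one_rpow αl).symm
        _ ≤ ((2:ℝ) ^ δ) ^ αl := Real.rpow_le_rpow zero_le_one h2 hαl.le
    have hφκ : 0 < φ κ := hφ_pos κ hκ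
    have hφR : 0 < φ (2 ^ δ * κ) := hφ_pos _ (by positivity)
    have h3 : cl * φ κ ≤ φ (2 ^ δ * κ) := by
      have h3' : cl ≤ φ (2 ^ δ * κ) / φ κ := by
        have hmm : cl * 1 ≤ cl * ((2:ℝ) ^ δ) ^ αl :=
          mul_le_mul_of_nonneg_left hpow1 hcl.le
        calc cl = cl * 1 := (mul_one cl).symm
          _ ≤ cl * ((2:ℝ) ^ δ) ^ αl := hmm
          _ ≤ φ (2 ^ δ * κ) / φ κ := hlow
      exact (le_div_iff₀ hφκ).mp h3'
    have h4 : cl * φ κ ≤ 2 ^ δ * φ (2 ^ δ * κ) :=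
      h3.trans (le_mul_of_one_le_left hφR.le h2)
    unfold NNscale
    rw [div_le_iff₀ (by positivity)]
    calc φ κ = cl⁻¹ * (cl * φ κ) := by field_simp
      _ ≤ cl⁻¹ * (2 ^ δ * φ (2 ^ δ * κ)) :=
          mul_le_mul_of_nonneg_left h4 (by positivity)
  have hlogcl : 0 ≤ -Real.log cl := by
    have := Real.log_nonpos hcl.le hcl1
    linarith
  have hLle : ∀ δ : ℕ, Real.log (NNscale φ κ δ) ≤ -Real.log cl := by
    intro δ
    rw [← Real.log_inv]
    exact Real.log_le_log (hNpos δ) (hNle δ)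
  set Lg : ℕ → ℝ := fun j => Real.log (NNscale φ κ (n j)) with hLgdef
  set Yv : ℝ := ∑ j₀ ∈ Finset.Icc i₀ m, w j₀ *
      ((b₀ + q) * Lg j₀ + q * ∑ j ∈ Finset.Icc (j₀ + 1) m, Lg j) with hYdef
  obtain ⟨j₀, hj₀mem, hj₀le⟩ : ∃ j₀ ∈ Finset.Icc i₀ m,
      (b₀ + q) * Lg j₀ + q * ∑ j ∈ Finset.Icc (j₀ + 1) m, Lg j ≤ Yv := by
    by_contra hc
    push_neg at hc
    have hlt : ∑ j₀ ∈ Finset.Icc i₀ m, w j₀ * Yv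
        < ∑ j₀ ∈ Finset.Icc i₀ m, w j₀ *
          ((b₀ + q) * Lg j₀ + q * ∑ j ∈ Finset.Icc (j₀ + 1) m, Lg j) := by
      apply Finset.sum_lt_sum
      · intro i hi
        exact mul_le_mul_of_nonneg_left (hc i hi).le (hw_nonneg i)
      · refine ⟨i₀, Finset.mem_Icc.mpr (by omega), ?_⟩
        exact (mul_lt_mul_iff_right₀ hwi₀pos).mpr (hc i₀ (Finset.mem_Icc.mpr (by omega)))
    rw [← Finset.sum_mul, hWsum, one_mul, ← hYdef] at hlt
    exact lt_irrefl _ hlt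
  have hsplit : ∀ j, i₀ ≤ j → j ≤ m →
      (∑ j₀ ∈ Finset.Icc i₀ (j - 1), w j₀) + w j + ∑ j₀ ∈ Finset.Icc (j + 1) m, w j₀ = 1 := by
    intro j h1 h2
    have ha := Finset.sum_Ico_consecutive w (by omega : i₀ ≤ j) (by omega : j ≤ m + 1)
    have hb : Finset.Ico i₀ (m + 1) = Finset.Icc i₀ m := Finset.Ico_add_one_right_eq_Icc i₀ m
    have hc2 : Finset.Ico j (m + 1) = Finset.Icc j m := Finset.Ico_add_one_right_eq_Icc j m
    have hd2 : Finset.Ico i₀ j = Finset.Icc i₀ (j - 1) := by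
      rw [← Finset.Ico_add_one_right_eq_Icc]
      congr 1
      omega
    have he : ∑ j₀ ∈ Finset.Icc j m, w j₀ = w j + ∑ j₀ ∈ Finset.Icc (j + 1) m, w j₀ := by
      rw [Finset.Icc_eq_cons_Ioc h2, Finset.sum_cons, ← Finset.Icc_add_one_left_eq_Ioc]
    rw [hb, hc2, hd2, he] at ha
    linarith [hWsum, ha]
  have hswap : Yv = ∑ j ∈ Finset.Icc i₀ m,
      ((b₀ + q) * w j + q * ∑ j₀ ∈ Finset.Icc i₀ (j - 1), w j₀) * Lg j := by
    rw [hYdef]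
    have h1 : ∀ j₀ ∈ Finset.Icc i₀ m,
        w j₀ * ((b₀ + q) * Lg j₀ + q * ∑ j ∈ Finset.Icc (j₀ + 1) m, Lg j)
          = (b₀ + q) * w j₀ * Lg j₀ + ∑ j ∈ Finset.Icc (j₀ + 1) m, q * (w j₀ * Lg j) := by
      intro j₀ _
      rw [mul_add, mul_left_comm (w j₀) q, Finset.mul_sum, Finset.mul_sum]
      congr 1
      ring
    rw [Finset.sum_congr rfl h1, Finset.sum_add_distrib]
    have h2 : ∑ j₀ ∈ Finset.Icc i₀ m, ∑ j ∈ Finset.Icc (j₀ + 1) m, q * (w j₀ * Lg j)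
        = ∑ j ∈ Finset.Icc i₀ m, ∑ j₀ ∈ Finset.Icc i₀ (j - 1), q * (w j₀ * Lg j) := by
      apply Finset.sum_comm'
      intro x y
      simp only [Finset.mem_Icc]
      omega
    rw [h2, ← Finset.sum_add_distrib]
    refine Finset.sum_congr rfl fun j hj => ?_
    have h3 : (q * ∑ j₀ ∈ Finset.Icc i₀ (j - 1), w j₀) * Lg j
        = ∑ j₀ ∈ Finset.Icc i₀ (j - 1), q * (w j₀ * Lg j) := by
      rw [mul_assoc, Finset.sum_mul, Finset.mul_sum]
    rw [← h3]
    ring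
  have hYle : Yv ≤ (d : ℝ) * (-Real.log cl)
      + ∑ j ∈ Finset.Icc i₀ m, (q + θ) * Lg j := by
    rw [hswap]
    have hcoef : ∀ j ∈ Finset.Icc i₀ m,
        ((b₀ + q) * w j + q * ∑ j₀ ∈ Finset.Icc i₀ (j - 1), w j₀) * Lg j
          = (q + θ) * Lg j
            + (b₀ * w j - q * ∑ j₀ ∈ Finset.Icc (j + 1) m, w j₀ - θ) * Lg j := by
      intro j hj
      rw [Finset.mem_Icc] at hj
      have hs := hsplit j hj.1 hj.2
      have hcoefeq : (b₀ + q) * w j + q * ∑ j₀ ∈ Finset.Icc i₀ (j - 1), w j₀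
          = (q + θ) + (b₀ * w j - q * ∑ j₀ ∈ Finset.Icc (j + 1) m, w j₀ - θ) := by
        linear_combination q * hs
      rw [hcoefeq, add_mul]
    rw [Finset.sum_congr rfl hcoef, Finset.sum_add_distrib]
    have hFL : ∀ j ∈ Finset.Icc i₀ m,
        (b₀ * w j - q * ∑ j₀ ∈ Finset.Icc (j + 1) m, w j₀ - θ) * Lg j ≤ -Real.log cl := by
      intro j hj
      rw [Finset.mem_Icc] at hj
      have h0 : 0 ≤ b₀ * w j - q * ∑ j₀ ∈ Finset.Icc (j + 1) m, w j₀ - θ := by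
        have := hF0 j hj.1 hj.2; linarith
      have h1 : b₀ * w j - q * ∑ j₀ ∈ Finset.Icc (j + 1) m, w j₀ - θ ≤ 1 := hF1 j hj.1 hj.2
      calc (b₀ * w j - q * ∑ j₀ ∈ Finset.Icc (j + 1) m, w j₀ - θ) * Lg j
          ≤ (b₀ * w j - q * ∑ j₀ ∈ Finset.Icc (j + 1) m, w j₀ - θ) * (-Real.log cl) :=
            mul_le_mul_of_nonneg_left (hLle (n j)) h0
        _ ≤ 1 * (-Real.log cl) := mul_le_mul_of_nonneg_right h1 hlogcl
        _ = -Real.log cl := one_mul _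
    have hsum_le := Finset.sum_le_card_nsmul (Finset.Icc i₀ m) _ (-Real.log cl) hFL
    have hcard : (Finset.Icc i₀ m).card = K + 1 := by
      rw [Nat.card_Icc]; omega
    rw [hcard, nsmul_eq_mul] at hsum_le
    have hdK : ((K + 1 : ℕ) : ℝ) * (-Real.log cl) ≤ (d : ℝ) * (-Real.log cl) := by
      apply mul_le_mul_of_nonneg_right _ hlogcl
      exact_mod_cast hKd
    linarith [hsum_le, hdK]
  rw [Finset.mem_Icc] at hj₀mem
  refine ⟨j₀, hj₀mem.1, hj₀mem.2, ?_⟩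
  have hprodpos1 : 0 < ∏ j ∈ Finset.Icc (j₀ + 1) m, NNscale φ κ (n j) ^ q :=
    Finset.prod_pos fun j _ => Real.rpow_pos_of_pos (hNpos (n j)) q
  have hprodpos2 : 0 < ∏ j ∈ Finset.Icc i₀ m, NNscale φ κ (n j) ^ (q + θ) :=
    Finset.prod_pos fun j _ => Real.rpow_pos_of_pos (hNpos (n j)) (q + θ)
  have hLpos : 0 < NNscale φ κ (n j₀) ^ (b₀ + q) *
      ∏ j ∈ Finset.Icc (j₀ + 1) m, NNscale φ κ (n j) ^ q :=
    mul_pos (Real.rpow_pos_of_pos (hNpos _) _) hprodpos1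
  have hclpow : (0:ℝ) < cl⁻¹ ^ d := by positivity
  have hRpos : 0 < cl⁻¹ ^ d * ∏ j ∈ Finset.Icc i₀ m, NNscale φ κ (n j) ^ (q + θ) :=
    mul_pos hclpow hprodpos2
  have hlogL : Real.log (NNscale φ κ (n j₀) ^ (b₀ + q) *
      ∏ j ∈ Finset.Icc (j₀ + 1) m, NNscale φ κ (n j) ^ q)
      = (b₀ + q) * Lg j₀ + q * ∑ j ∈ Finset.Icc (j₀ + 1) m, Lg j := by
    rw [Real.log_mul (Real.rpow_pos_of_pos (hNpos _) _).ne' hprodpos1.ne',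
      Real.log_rpow (hNpos _),
      Real.log_prod (fun j _ => (Real.rpow_pos_of_pos (hNpos (n j)) q).ne')]
    have h5 : ∀ j ∈ Finset.Icc (j₀ + 1) m, Real.log (NNscale φ κ (n j) ^ q) = q * Lg j :=
      fun j _ => Real.log_rpow (hNpos (n j)) q
    rw [Finset.sum_congr rfl h5, Finset.mul_sum]
  have hlogR : Real.log (cl⁻¹ ^ d * ∏ j ∈ Finset.Icc i₀ m, NNscale φ κ (n j) ^ (q + θ))
      = (d : ℝ) * (-Real.log cl) + ∑ j ∈ Finset.Icc i₀ m, (q + θ) * Lg j := by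
    rw [Real.log_mul hclpow.ne' hprodpos2.ne', Real.log_pow, Real.log_inv,
      Real.log_prod (fun j _ => (Real.rpow_pos_of_pos (hNpos (n j)) _).ne')]
    have h5 : ∀ j ∈ Finset.Icc i₀ m,
        Real.log (NNscale φ κ (n j) ^ (q + θ)) = (q + θ) * Lg j :=
      fun j _ => Real.log_rpow (hNpos (n j)) _
    rw [Finset.sum_congr rfl h5]
  have hfinal : Real.log (NNscale φ κ (n j₀) ^ (b₀ + q) *
      ∏ j ∈ Finset.Icc (j₀ + 1) m, NNscale φ κ (n j) ^ q)
      ≤ Real.log (cl⁻¹ ^ d * ∏ j ∈ Finset.Icc i₀ m, NNscale φ κ (n j) ^ (q + θ)) := by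
    rw [hlogL, hlogR]
    exact le_trans hj₀le hYle
  have hexp := Real.exp_le_exp.mpr hfinal
  rwa [Real.exp_log hLpos, Real.exp_log hRpos] at hexp
end
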